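/- Let p_1, p_2, q_1, q_2 ∈ ℝ[x] be nonconstant polynomials, each of degree at most δ, all having zero constant term. Assume p_1 ≢_a q_1. Then there exists a constant c > 0 depending only on δ such that for all n ∈ ℕ and all finite sets A, B ⊂ ℝ with |A| = |B| = n, |p_1(A) + p_2(B)| · |q_1(A) + q_2(B)| ≥ c · n^{5/2}. -/

import Mathlib

open Polynomial Pointwise

noncomputable section

/-- `p ≡_a q` : there is a nonzero real `λ` with `p(x) = λ q(x)` for all real `x`. -/
def EquivA (p q : Polynomial ℝ) : Prop :=
  ∃ l : ℝ, l ≠ 0 ∧ ∀ x : ℝ, p.eval x = l * q.eval x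

open scoped Classical


/-- fibers of a nonconstant polynomial have size ≤ natDegree -/
lemma fiber_card (p : Polynomial ℝ) (hp : 0 < p.natDegree) (A : Finset ℝ) :
    A.card ≤ p.natDegree * (A.image (fun a => p.eval a)).card := by
  apply Finset.card_le_mul_card_image_of_maps_to (fun a ha => Finset.mem_image_of_mem _ ha)
  intro b _
  have hpb : p - C b ≠ 0 := by
    intro h
    have : p = C b := by linear_combination (norm := ring_nf) h
    rw [this] at hp; simp [natDegree_C] at hp
  calc (A.filter (fun a => p.eval a = b)).card
      ≤ (p - C b).roots.toFinset.card := by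
        apply Finset.card_le_card
        intro a ha
        simp only [Finset.mem_filter] at ha
        simp only [Multiset.mem_toFinset, mem_roots hpb, IsRoot.def, eval_sub, eval_C]
        linarith [ha.2]
    _ ≤ Multiset.card (p - C b).roots := Multiset.toFinset_card_le _
    _ ≤ (p - C b).natDegree := card_roots' _
    _ ≤ p.natDegree := by
        have := natDegree_sub_le p (C b)
        simpa [natDegree_C] using this

/-- a continuous function nonvanishing on an interval has constant sign -/
lemma sign_const {g : ℝ → ℝ} {a b : ℝ}
    (hg : ContinuousOn g (Set.Icc a b)) (hab : a ≤ b)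
    (h : ∀ x ∈ Set.Icc a b, g x ≠ 0) :
    (∀ x ∈ Set.Icc a b, 0 < g x) ∨ (∀ x ∈ Set.Icc a b, g x < 0) := by
  have ha : a ∈ Set.Icc a b := Set.left_mem_Icc.2 hab
  rcases lt_or_gt_of_ne (h a ha) with hneg | hpos
  · right
    intro x hx
    by_contra hle
    push_neg at hle
    have hxpos : 0 < g x := lt_of_le_of_ne hle (Ne.symm (h x hx))
    have hsub : Set.uIcc a x ⊆ Set.Icc a b := Set.uIcc_subset_Icc ha hx
    have := intermediate_value_uIcc (hg.mono hsub)
    have h0 : (0:ℝ) ∈ Set.uIcc (g a) (g x) := by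
      rw [Set.mem_uIcc]; left; constructor <;> linarith
    obtain ⟨y, hy, hy0⟩ := this h0
    exact h y (hsub hy) hy0
  · left
    intro x hx
    by_contra hle
    push_neg at hle
    have hxneg : g x < 0 := lt_of_le_of_ne hle (h x hx)
    have hsub : Set.uIcc a x ⊆ Set.Icc a b := Set.uIcc_subset_Icc ha hx
    have := intermediate_value_uIcc (hg.mono hsub)
    have h0 : (0:ℝ) ∈ Set.uIcc (g a) (g x) := by
      rw [Set.mem_uIcc]; right; constructor <;> linarith
    obtain ⟨y, hy, hy0⟩ := this h0
    exact h y (hsub hy) hy0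


lemma endpoint_eq (S : Finset ℝ) (z e e' : ℝ) (he : e ∈ S) (he' : e' ∈ S)
    (h1 : z < e) (h2 : z < e')
    (hc : (S.filter fun w => z < w ∧ w ≤ e).card = (S.filter fun w => z < w ∧ w ≤ e').card) :
    e = e' := by
  rcases lt_trichotomy e e' with h | h | h
  · exfalso
    have hss : (S.filter fun w => z < w ∧ w ≤ e) ⊂ (S.filter fun w => z < w ∧ w ≤ e') := by
      constructor
      · intro w hw
        simp only [Finset.mem_filter] at hw ⊢
        exact ⟨hw.1, hw.2.1, le_trans hw.2.2 (le_of_lt h)⟩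
      · intro hsub
        have : e' ∈ (S.filter fun w => z < w ∧ w ≤ e) := hsub (by
          simp only [Finset.mem_filter]; exact ⟨he', h2, le_refl _⟩)
        simp only [Finset.mem_filter] at this
        linarith [this.2.2]
    exact absurd hc (Nat.ne_of_lt (Finset.card_lt_card hss))
  · exact h
  · exfalso
    have hss : (S.filter fun w => z < w ∧ w ≤ e') ⊂ (S.filter fun w => z < w ∧ w ≤ e) := by
      constructor
      · intro w hw
        simp only [Finset.mem_filter] at hw ⊢
        exact ⟨hw.1, hw.2.1, le_trans hw.2.2 (le_of_lt h)⟩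
      · intro hsub
        have : e ∈ (S.filter fun w => z < w ∧ w ≤ e') := hsub (by
          simp only [Finset.mem_filter]; exact ⟨he, h1, le_refl _⟩)
        simp only [Finset.mem_filter] at this
        linarith [this.2.2]
    exact absurd hc.symm (Nat.ne_of_lt (Finset.card_lt_card hss))

lemma core_arith (k S T B C R R' β γ Φ : ℝ)
    (h1 : 1 ≤ k) (h2 : k + 1 ≤ S) (h3 : k + 1 ≤ T)
    (h4 : β * (R + 1) ≤ S * B) (h5 : γ * (R' + 1) ≤ T * C)
    (h6 : 4 * S < k * (R + 1)) (h7 : k * R ≤ 4 * S)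
    (h6' : 4 * T < k * (R' + 1)) (h7' : k * R' ≤ 4 * T)
    (h8 : Φ ≤ S * (R + 1) * (T * (R' + 1)))
    (h9 : k * B * C - β * C - γ * B ≤ Φ)
    (hβ0 : 0 ≤ β) (hγ0 : 0 ≤ γ) (hB0 : 1 ≤ B) (hC0 : 1 ≤ C)
    (hR0 : 0 ≤ R) (hR0' : 0 ≤ R') :
    k ^ 3 * B * C ≤ 50 * (S * T) ^ 2 := by
  have hS0 : 0 < S := by linarith
  have hT0 : 0 < T := by linarith
  have hk0 : 0 < k := by linarith
  have key1 : 4 * β ≤ k * B := by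
    have a1 : β * (4 * S) ≤ β * (k * (R + 1)) :=
      mul_le_mul_of_nonneg_left (le_of_lt h6) hβ0
    have a3 : k * (β * (R + 1)) ≤ k * (S * B) :=
      mul_le_mul_of_nonneg_left h4 (le_of_lt hk0)
    have a4 : (4 * β) * S ≤ (k * B) * S := by linarith
    exact le_of_mul_le_mul_right a4 hS0
  have key2 : 4 * γ ≤ k * C := by
    have a1 : γ * (4 * T) ≤ γ * (k * (R' + 1)) :=
      mul_le_mul_of_nonneg_left (le_of_lt h6') hγ0
    have a3 : k * (γ * (R' + 1)) ≤ k * (T * C) :=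
      mul_le_mul_of_nonneg_left h5 (le_of_lt hk0)
    have a4 : (4 * γ) * T ≤ (k * C) * T := by linarith
    exact le_of_mul_le_mul_right a4 hT0
  have key3 : k * B * C / 2 ≤ Φ := by
    have p1 : β * C ≤ (k * B / 4) * C :=
      mul_le_mul_of_nonneg_right (by linarith) (by linarith)
    have p2 : γ * B ≤ (k * C / 4) * B :=
      mul_le_mul_of_nonneg_right (by linarith) (by linarith)
    linarith
  have key4 : k * (R + 1) ≤ 5 * S := by linarith
  have key5 : k * (R' + 1) ≤ 5 * T := by linarith
  have b2 : (k * (R + 1)) * (k * (R' + 1)) ≤ (5 * S) * (5 * T) :=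
    mul_le_mul key4 key5 (by positivity) (by positivity)
  have b3 : (k * (R + 1)) * (k * (R' + 1)) * (S * T) ≤ (5 * S) * (5 * T) * (S * T) :=
    mul_le_mul_of_nonneg_right b2 (by positivity)
  have c1 : k ^ 3 * B * C ≤ 2 * k ^ 2 * Φ := by
    have := mul_le_mul_of_nonneg_left key3 (by positivity : (0:ℝ) ≤ 2 * k ^ 2)
    linarith
  have c2 : 2 * k ^ 2 * Φ ≤ 2 * ((k * (R + 1)) * (k * (R' + 1)) * (S * T)) := by
    have := mul_le_mul_of_nonneg_left h8 (by positivity : (0:ℝ) ≤ 2 * k ^ 2)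
    linarith
  linarith [b3]

/-- The squeezing core lemma. -/
lemma core (S T B C : Finset ℝ) (k : ℕ) (x y : ℕ → ℝ)
    (hk : 1 ≤ k) (hB : B.Nonempty) (hC : C.Nonempty)
    (hx : ∀ i j, i < j → j ≤ k → x i < x j)
    (hy : ∀ i j, i < j → j ≤ k → y i < y j)
    (hinj : ∀ i j, i < k → j < k → x (i+1) - x i = x (j+1) - x j →
        y (i+1) - y i = y (j+1) - y j → i = j)
    (hS : ∀ i ≤ k, ∀ b ∈ B, x i + b ∈ S)
    (hT : ∀ i ≤ k, ∀ c ∈ C, y i + c ∈ T) :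
    k^3 * B.card * C.card ≤ 50 * (S.card * T.card)^2 := by
  set r : ℕ → ℝ → ℕ := fun i b => (S.filter fun w => x i + b < w ∧ w ≤ x (i+1) + b).card with hr
  set r' : ℕ → ℝ → ℕ := fun i c => (T.filter fun w => y i + c < w ∧ w ≤ y (i+1) + c).card with hr'
  set R : ℕ := 4 * S.card / k with hR
  set R' : ℕ := 4 * T.card / k with hR'
  -- each r is at least 1
  have hr1 : ∀ i < k, ∀ b ∈ B, 1 ≤ r i b := by
    intro i hi b hb
    have hmem : x (i+1) + b ∈ S.filter fun w => x i + b < w ∧ w ≤ x (i+1) + b := by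
      simp only [Finset.mem_filter]
      exact ⟨hS (i+1) hi b hb, by linarith [hx i (i+1) (Nat.lt_succ_self i) hi], le_refl _⟩
    exact Finset.card_pos.2 ⟨_, hmem⟩
  -- row sums of r bounded by S.card
  have hsumS : ∀ b, (∑ i ∈ Finset.range k, r i b) ≤ S.card := by
    intro b
    have hdisj : ∀ i ∈ Finset.range k, ∀ j ∈ Finset.range k, i ≠ j →
        Disjoint (S.filter fun w => x i + b < w ∧ w ≤ x (i+1) + b)
                 (S.filter fun w => x j + b < w ∧ w ≤ x (j+1) + b) := by
      intro i hi j hj hij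
      rw [Finset.mem_range] at hi hj
      rw [Finset.disjoint_left]
      intro w hwi hwj
      simp only [Finset.mem_filter] at hwi hwj
      rcases lt_or_gt_of_ne hij with h | h
      · have : x (i+1) ≤ x j := by
          rcases eq_or_lt_of_le (Nat.succ_le_of_lt h) with he | hlt
          · rw [show _ + 1 = _ from he]
          · exact le_of_lt (hx (i+1) j hlt (le_of_lt hj))
        linarith [hwi.2.2, hwj.2.1]
      · have : x (j+1) ≤ x i := by
          rcases eq_or_lt_of_le (Nat.succ_le_of_lt h) with he | hlt
          · rw [show _ + 1 = _ from he]
          · exact le_of_lt (hx (j+1) i hlt (le_of_lt hi))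
        linarith [hwj.2.2, hwi.2.1]
    calc (∑ i ∈ Finset.range k, r i b)
        = ((Finset.range k).biUnion (fun i => S.filter fun w => x i + b < w ∧ w ≤ x (i+1) + b)).card :=
          (Finset.card_biUnion hdisj).symm
      _ ≤ S.card := Finset.card_le_card (Finset.biUnion_subset.2 fun i _ => Finset.filter_subset _ _)
  have hsumT : ∀ c, (∑ i ∈ Finset.range k, r' i c) ≤ T.card := by
    intro c
    have hdisj : ∀ i ∈ Finset.range k, ∀ j ∈ Finset.range k, i ≠ j →
        Disjoint (T.filter fun w => y i + c < w ∧ w ≤ y (i+1) + c)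
                 (T.filter fun w => y j + c < w ∧ w ≤ y (j+1) + c) := by
      intro i hi j hj hij
      rw [Finset.mem_range] at hi hj
      rw [Finset.disjoint_left]
      intro w hwi hwj
      simp only [Finset.mem_filter] at hwi hwj
      rcases lt_or_gt_of_ne hij with h | h
      · have : y (i+1) ≤ y j := by
          rcases eq_or_lt_of_le (Nat.succ_le_of_lt h) with he | hlt
          · rw [show _ + 1 = _ from he]
          · exact le_of_lt (hy (i+1) j hlt (le_of_lt hj))
        linarith [hwi.2.2, hwj.2.1]
      · have : y (j+1) ≤ y i := by
          rcases eq_or_lt_of_le (Nat.succ_le_of_lt h) with he | hlt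
          · rw [show _ + 1 = _ from he]
          · exact le_of_lt (hy (j+1) i hlt (le_of_lt hi))
        linarith [hwj.2.2, hwi.2.1]
    calc (∑ i ∈ Finset.range k, r' i c)
        = ((Finset.range k).biUnion (fun i => T.filter fun w => y i + c < w ∧ w ≤ y (i+1) + c)).card :=
          (Finset.card_biUnion hdisj).symm
      _ ≤ T.card := Finset.card_le_card (Finset.biUnion_subset.2 fun i _ => Finset.filter_subset _ _)
  -- good/bad counts
  set gB : ℕ → Finset ℝ := fun i => B.filter (fun b => r i b ≤ R) with hgB
  set gC : ℕ → Finset ℝ := fun i => C.filter (fun c => r' i c ≤ R') with hgC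
  set bB : ℕ → Finset ℝ := fun i => B.filter (fun b => ¬ r i b ≤ R) with hbB
  set bC : ℕ → Finset ℝ := fun i => C.filter (fun c => ¬ r' i c ≤ R') with hbC
  have hsplitB : ∀ i, (gB i).card + (bB i).card = B.card := fun i =>
    Finset.card_filter_add_card_filter_not _
  have hsplitC : ∀ i, (gC i).card + (bC i).card = C.card := fun i =>
    Finset.card_filter_add_card_filter_not _
  -- bad count bounds
  have hbadB : (∑ i ∈ Finset.range k, (bB i).card) * (R + 1) ≤ S.card * B.card := by
    have h1 : ∀ i ∈ Finset.range k, (bB i).card * (R + 1) ≤ ∑ b ∈ B, r i b := by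
      intro i _
      calc (bB i).card * (R+1) = (bB i).card • (R+1) := by rw [smul_eq_mul]
        _ ≤ ∑ b ∈ bB i, r i b := Finset.card_nsmul_le_sum _ _ _ (by
            intro b hb
            simp only [hbB, Finset.mem_filter] at hb
            omega)
        _ ≤ ∑ b ∈ B, r i b := Finset.sum_le_sum_of_subset (Finset.filter_subset _ _)
    calc (∑ i ∈ Finset.range k, (bB i).card) * (R+1)
        = ∑ i ∈ Finset.range k, (bB i).card * (R+1) := Finset.sum_mul _ _ _
      _ ≤ ∑ i ∈ Finset.range k, ∑ b ∈ B, r i b := Finset.sum_le_sum h1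
      _ = ∑ b ∈ B, ∑ i ∈ Finset.range k, r i b := Finset.sum_comm
      _ ≤ ∑ _b ∈ B, S.card := Finset.sum_le_sum (fun b _ => hsumS b)
      _ = B.card * S.card := by rw [Finset.sum_const, smul_eq_mul]
      _ = S.card * B.card := mul_comm _ _
  have hbadC : (∑ i ∈ Finset.range k, (bC i).card) * (R' + 1) ≤ T.card * C.card := by
    have h1 : ∀ i ∈ Finset.range k, (bC i).card * (R' + 1) ≤ ∑ c ∈ C, r' i c := by
      intro i _
      calc (bC i).card * (R'+1) = (bC i).card • (R'+1) := by rw [smul_eq_mul]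
        _ ≤ ∑ c ∈ bC i, r' i c := Finset.card_nsmul_le_sum _ _ _ (by
            intro c hc
            simp only [hbC, Finset.mem_filter] at hc
            omega)
        _ ≤ ∑ c ∈ C, r' i c := Finset.sum_le_sum_of_subset (Finset.filter_subset _ _)
    calc (∑ i ∈ Finset.range k, (bC i).card) * (R'+1)
        = ∑ i ∈ Finset.range k, (bC i).card * (R'+1) := Finset.sum_mul _ _ _
      _ ≤ ∑ i ∈ Finset.range k, ∑ c ∈ C, r' i c := Finset.sum_le_sum h1
      _ = ∑ c ∈ C, ∑ i ∈ Finset.range k, r' i c := Finset.sum_comm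
      _ ≤ ∑ _c ∈ C, T.card := Finset.sum_le_sum (fun c _ => hsumT c)
      _ = C.card * T.card := by rw [Finset.sum_const, smul_eq_mul]
      _ = T.card * C.card := mul_comm _ _
  -- S and T are large
  obtain ⟨b₀, hb₀⟩ := hB
  obtain ⟨c₀, hc₀⟩ := hC
  have hSk : k + 1 ≤ S.card := by
    have hinj0 : Set.InjOn (fun i => x i + b₀) ↑(Finset.range (k+1)) := by
      intro i hi j hj hij
      simp only [Finset.coe_range, Set.mem_Iio] at hi hj
      by_contra hne
      rcases lt_or_gt_of_ne hne with h | h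
      · have := hx i j h (Nat.lt_succ_iff.1 hj); simp only at hij; linarith
      · have := hx j i h (Nat.lt_succ_iff.1 hi); simp only at hij; linarith
    calc k + 1 = (Finset.range (k+1)).card := (Finset.card_range _).symm
      _ = ((Finset.range (k+1)).image (fun i => x i + b₀)).card :=
          (Finset.card_image_of_injOn hinj0).symm
      _ ≤ S.card := Finset.card_le_card (by
          intro w hw
          simp only [Finset.mem_image, Finset.mem_range] at hw
          obtain ⟨i, hi, rfl⟩ := hw
          exact hS i (Nat.lt_succ_iff.1 hi) b₀ hb₀)
  have hTk : k + 1 ≤ T.card := by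
    have hinj0 : Set.InjOn (fun i => y i + c₀) ↑(Finset.range (k+1)) := by
      intro i hi j hj hij
      simp only [Finset.coe_range, Set.mem_Iio] at hi hj
      by_contra hne
      rcases lt_or_gt_of_ne hne with h | h
      · have := hy i j h (Nat.lt_succ_iff.1 hj); simp only at hij; linarith
      · have := hy j i h (Nat.lt_succ_iff.1 hi); simp only at hij; linarith
    calc k + 1 = (Finset.range (k+1)).card := (Finset.card_range _).symm
      _ = ((Finset.range (k+1)).image (fun i => y i + c₀)).card :=
          (Finset.card_image_of_injOn hinj0).symm
      _ ≤ T.card := Finset.card_le_card (by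
          intro w hw
          simp only [Finset.mem_image, Finset.mem_range] at hw
          obtain ⟨i, hi, rfl⟩ := hw
          exact hT i (Nat.lt_succ_iff.1 hi) c₀ hc₀)
  -- the good triple set
  set G : Finset (ℕ × ℝ × ℝ) :=
    (Finset.range k).biUnion (fun i => {i} ×ˢ (gB i ×ˢ gC i)) with hG
  have hGmem : ∀ t : ℕ × ℝ × ℝ, t ∈ G ↔
      t.1 ∈ Finset.range k ∧ t.2.1 ∈ gB t.1 ∧ t.2.2 ∈ gC t.1 := by
    intro t
    simp only [hG, Finset.mem_biUnion, Finset.mem_product, Finset.mem_singleton]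
    constructor
    · rintro ⟨i, hi, hti, htb, htc⟩
      subst hti
      exact ⟨hi, htb, htc⟩
    · rintro ⟨h1, h2, h3⟩
      exact ⟨t.1, h1, rfl, h2, h3⟩
  have hGcard : G.card = ∑ i ∈ Finset.range k, (gB i).card * (gC i).card := by
    rw [hG, Finset.card_biUnion]
    · apply Finset.sum_congr rfl
      intro i _
      rw [Finset.card_product, Finset.card_product, Finset.card_singleton, one_mul]
    · intro i _ j _ hij
      rw [Function.onFun, Finset.disjoint_left]
      intro t ht1 ht2
      simp only [Finset.mem_product, Finset.mem_singleton] at ht1 ht2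
      exact hij (ht1.1.symm.trans ht2.1)
  -- the injection
  have hGinj : G.card ≤ ((S ×ˢ Finset.range (R+1)) ×ˢ (T ×ˢ Finset.range (R'+1))).card := by
    apply Finset.card_le_card_of_injOn
      (fun t => ((x t.1 + t.2.1, r t.1 t.2.1), (y t.1 + t.2.2, r' t.1 t.2.2)))
    · intro t ht
      rw [Finset.mem_coe, hGmem] at ht
      obtain ⟨h1, h2, h3⟩ := ht
      rw [Finset.mem_range] at h1
      simp only [hgB, hgC, Finset.mem_filter] at h2 h3
      simp only [Finset.mem_coe, Finset.mem_product, Finset.mem_range]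
      exact ⟨⟨hS t.1 (le_of_lt h1) t.2.1 h2.1, by omega⟩,
             ⟨hT t.1 (le_of_lt h1) t.2.2 h3.1, by omega⟩⟩
    · intro t ht t' ht' heq
      rw [Finset.mem_coe, hGmem] at ht ht'
      obtain ⟨hik, hb, hc⟩ := ht
      obtain ⟨hik', hb', hc'⟩ := ht'
      rw [Finset.mem_range] at hik hik'
      simp only [hgB, hgC, Finset.mem_filter] at hb hc hb' hc'
      obtain ⟨i, b, c⟩ := t
      obtain ⟨i', b', c'⟩ := t'
      simp only [Prod.mk.injEq] at heq ⊢
      obtain ⟨⟨hz, hrz⟩, ⟨hw, hrw⟩⟩ := heq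
      simp only at hz hrz hw hrw hb hc hb' hc' hik hik'
      -- equal right endpoints on the x-side
      have hE : x (i+1) + b = x (i'+1) + b' := by
        apply endpoint_eq S (x i + b) _ _
          (hS (i+1) hik b hb.1) (hS (i'+1) hik' b' hb'.1)
          (by linarith [hx i (i+1) (Nat.lt_succ_self i) hik])
          (by rw [hz]; linarith [hx i' (i'+1) (Nat.lt_succ_self i') hik'])
        have : r i b = r i' b' := hrz
        rw [hr] at this
        simp only at this
        rw [this, hz]
      have hF : y (i+1) + c = y (i'+1) + c' := by
        apply endpoint_eq T (y i + c) _ _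
          (hT (i+1) hik c hc.1) (hT (i'+1) hik' c' hc'.1)
          (by linarith [hy i (i+1) (Nat.lt_succ_self i) hik])
          (by rw [hw]; linarith [hy i' (i'+1) (Nat.lt_succ_self i') hik'])
        have : r' i c = r' i' c' := hrw
        rw [hr'] at this
        simp only at this
        rw [this, hw]
      have hii : i = i' := hinj i i' hik hik' (by linarith) (by linarith)
      subst hii
      refine ⟨rfl, by linarith, by linarith⟩
  have hGupper : G.card ≤ S.card * (R+1) * (T.card * (R'+1)) := by
    calc G.card ≤ ((S ×ˢ Finset.range (R+1)) ×ˢ (T ×ˢ Finset.range (R'+1))).card := hGinj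
      _ = S.card * (R+1) * (T.card * (R'+1)) := by
          rw [Finset.card_product, Finset.card_product, Finset.card_product,
              Finset.card_range, Finset.card_range]
  -- pass to the reals
  set β : ℕ := ∑ i ∈ Finset.range k, (bB i).card with hβ
  set γ : ℕ := ∑ i ∈ Finset.range k, (bC i).card with hγ
  have hGlower : (k : ℝ) * B.card * C.card - β * C.card - γ * B.card ≤ G.card := by
    rw [hGcard]
    push_cast
    calc (k : ℝ) * B.card * C.card - β * C.card - γ * B.card
        = ∑ i ∈ Finset.range k,
            ((B.card : ℝ) * C.card - (bB i).card * C.card - (bC i).card * B.card) := by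
          rw [Finset.sum_sub_distrib, Finset.sum_sub_distrib, Finset.sum_const,
              ← Finset.sum_mul, ← Finset.sum_mul]
          push_cast [hβ, hγ, Finset.card_range]
          ring
      _ ≤ ∑ i ∈ Finset.range k, ((gB i).card : ℝ) * (gC i).card := by
          apply Finset.sum_le_sum
          intro i _
          have h1 : ((gB i).card : ℝ) = B.card - (bB i).card := by
            have := hsplitB i; push_cast [← this]; ring
          have h2 : ((gC i).card : ℝ) = C.card - (bC i).card := by
            have := hsplitC i; push_cast [← this]; ring
          have hb1 : ((bB i).card : ℝ) ≤ B.card := by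
            exact_mod_cast Finset.card_filter_le _ _
          have hc1 : ((bC i).card : ℝ) ≤ C.card := by
            exact_mod_cast Finset.card_filter_le _ _
          rw [h1, h2]
          have hprod : (0:ℝ) ≤ ((bB i).card : ℝ) * ((bC i).card : ℝ) :=
            mul_nonneg (Nat.cast_nonneg _) (Nat.cast_nonneg _)
          have hexp : ((B.card : ℝ) - (bB i).card) * ((C.card : ℝ) - (bC i).card)
              = (B.card : ℝ) * C.card - (bB i).card * C.card - (bC i).card * B.card
                + (bB i).card * (bC i).card := by ring
          rw [hexp]
          linarith
  -- numeric facts about R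
  have hRk1 : 4 * S.card < k * (R + 1) := by
    rw [hR]
    have e := Nat.div_add_mod (4 * S.card) k
    have hmod : 4 * S.card % k < k := Nat.mod_lt _ (by omega)
    have h3 : k * (4 * S.card / k + 1) = k * (4 * S.card / k) + k := by ring
    omega
  have hRk2 : k * R ≤ 4 * S.card := by
    rw [hR, mul_comm]; exact Nat.div_mul_le_self _ _
  have hRk1' : 4 * T.card < k * (R' + 1) := by
    rw [hR']
    have e := Nat.div_add_mod (4 * T.card) k
    have hmod : 4 * T.card % k < k := Nat.mod_lt _ (by omega)
    have h3 : k * (4 * T.card / k + 1) = k * (4 * T.card / k) + k := by ring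
    omega
  have hRk2' : k * R' ≤ 4 * T.card := by
    rw [hR', mul_comm]; exact Nat.div_mul_le_self _ _
  -- final real arithmetic
  rw [← Nat.cast_le (α := ℝ)]
  push_cast
  exact core_arith (k:ℝ) S.card T.card B.card C.card R R' β γ G.card
    (by exact_mod_cast hk) (by exact_mod_cast hSk) (by exact_mod_cast hTk)
    (by exact_mod_cast hbadB) (by exact_mod_cast hbadC)
    (by exact_mod_cast hRk1) (by exact_mod_cast hRk2)
    (by exact_mod_cast hRk1') (by exact_mod_cast hRk2')
    (by exact_mod_cast hGupper) hGlower
    (Nat.cast_nonneg _) (Nat.cast_nonneg _)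
    (by exact_mod_cast Finset.card_pos.2 ⟨b₀, hb₀⟩)
    (by exact_mod_cast Finset.card_pos.2 ⟨c₀, hc₀⟩)
    (Nat.cast_nonneg _) (Nat.cast_nonneg _)

/-- the Wronskian-type polynomial is nonzero when `p ≢ₐ q`. -/
lemma W_ne_zero (p q : Polynomial ℝ) (hp : 0 < p.natDegree) (hq : 0 < q.natDegree)
    (hp0 : p.eval 0 = 0) (hq0 : q.eval 0 = 0) (hne : ¬ EquivA p q) :
    derivative (derivative q) * derivative p - derivative q * derivative (derivative p) ≠ 0 := by
  intro hW
  have hp' : derivative p ≠ 0 := by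
    intro h
    have := natDegree_eq_zero_of_derivative_eq_zero h
    omega
  have hq' : derivative q ≠ 0 := by
    intro h
    have := natDegree_eq_zero_of_derivative_eq_zero h
    omega
  -- choose an interval where p' has no roots
  set Z : Finset ℝ := (derivative p).roots.toFinset with hZ
  set M : ℝ := if h : Z.Nonempty then Z.max' h + 1 else 0 with hM
  have hMroot : ∀ x : ℝ, M ≤ x → (derivative p).eval x ≠ 0 := by
    intro x hx hx0
    have hxZ : x ∈ Z := by
      rw [hZ, Multiset.mem_toFinset, mem_roots hp']
      exact hx0
    have hne' : Z.Nonempty := ⟨x, hxZ⟩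
    rw [hM, dif_pos hne'] at hx
    have := Z.le_max' x hxZ
    linarith
  set w : ℝ → ℝ := fun t => (derivative q).eval t / (derivative p).eval t with hw
  have hderiv : ∀ x ∈ Set.Ico M (M+1), HasDerivWithinAt w 0 (Set.Ici x) x := by
    intro x hx
    have hx0 : (derivative p).eval x ≠ 0 := hMroot x hx.1
    have h1 : HasDerivAt (fun t => (derivative q).eval t) ((derivative (derivative q)).eval x) x :=
      (derivative q).hasDerivAt x
    have h2 : HasDerivAt (fun t => (derivative p).eval t) ((derivative (derivative p)).eval x) x :=
      (derivative p).hasDerivAt x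
    have h3 := h1.div h2 hx0
    have h4 : ((derivative (derivative q)).eval x * (derivative p).eval x -
        (derivative q).eval x * (derivative (derivative p)).eval x) = 0 := by
      have := congrArg (fun r => Polynomial.eval x r) hW
      simpa using this
    have h5 : ((derivative (derivative q)).eval x * (derivative p).eval x -
        (derivative q).eval x * (derivative (derivative p)).eval x) / ((derivative p).eval x)^2 = 0 := by
      rw [h4]; simp
    rw [h5] at h3
    exact h3.hasDerivWithinAt
  have hcont : ContinuousOn w (Set.Icc M (M+1)) := by
    apply ContinuousOn.div ((derivative q).continuous_aeval.continuousOn)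
      ((derivative p).continuous_aeval.continuousOn)
    intro x hx
    exact hMroot x hx.1
  have hconst := constant_of_has_deriv_right_zero hcont hderiv
  set lam : ℝ := w M with hlam
  have hroots : ∀ x ∈ Set.Icc M (M+1), (derivative q - C lam * derivative p).eval x = 0 := by
    intro x hx
    have h1 : w x = lam := hconst x hx
    have hx0 : (derivative p).eval x ≠ 0 := hMroot x hx.1
    rw [hw] at h1
    simp only at h1
    have : (derivative q).eval x = lam * (derivative p).eval x := by
      field_simp at h1
      linarith [h1]
    simp [eval_sub, eval_mul, eval_C, this]
  have hqp : derivative q - C lam * derivative p = 0 := by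
    have hIccInf : (Set.Icc M (M+1)).Infinite := Set.Icc_infinite (by linarith)
    exact eq_zero_of_infinite_isRoot _ (hIccInf.mono (fun x hx => hroots x hx))
  have hlam0 : lam ≠ 0 := by
    intro h
    rw [h] at hqp
    simp at hqp
    omega
  -- q - lam * p has zero derivative
  have hd : derivative (q - C lam * p) = 0 := by
    rw [derivative_sub, derivative_C_mul]
    linear_combination (norm := ring_nf) hqp
  have hdeg : (q - C lam * p).natDegree = 0 := natDegree_eq_zero_of_derivative_eq_zero hd
  have hC := eq_C_of_natDegree_eq_zero hdeg
  have hcoeff : (q - C lam * p).coeff 0 = 0 := by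
    have h0 : (q - C lam * p).eval 0 = 0 := by
      simp [eval_sub, eval_mul, eval_C, hp0, hq0]
    rw [hC] at h0
    simpa using h0
  rw [hcoeff] at hC
  simp only [map_zero] at hC
  have hqeq : q = C lam * p := by linear_combination (norm := ring_nf) hC
  apply hne
  refine ⟨lam⁻¹, inv_ne_zero hlam0, fun x => ?_⟩
  rw [hqeq, eval_mul, eval_C]
  field_simp

lemma mono_pm (p : Polynomial ℝ) {a b : ℝ} (hab : a ≤ b)
    (hp' : ∀ x ∈ Set.Icc a b, (derivative p).eval x ≠ 0) :
    ∃ ε : ℝ, (ε = 1 ∨ ε = -1) ∧ StrictMonoOn (fun t => ε * p.eval t) (Set.Icc a b) := by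
  have hcont : ContinuousOn (fun t => (derivative p).eval t) (Set.Icc a b) :=
    ((derivative p).continuous).continuousOn
  rcases sign_const hcont hab hp' with hpos | hneg
  · refine ⟨1, Or.inl rfl, ?_⟩
    apply strictMonoOn_of_deriv_pos (convex_Icc a b)
      ((continuous_const.mul p.continuous).continuousOn)
    intro t ht
    rw [interior_Icc] at ht
    have hd : HasDerivAt (fun t => (1:ℝ) * p.eval t) (1 * (derivative p).eval t) t :=
      ((p.hasDerivAt t).const_mul (1:ℝ))
    change 0 < deriv (fun t => (1:ℝ) * p.eval t) t
    rw [hd.deriv, one_mul]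
    exact hpos t (Set.mem_Icc_of_Ioo ht)
  · refine ⟨-1, Or.inr rfl, ?_⟩
    apply strictMonoOn_of_deriv_pos (convex_Icc a b)
      ((continuous_const.mul p.continuous).continuousOn)
    intro t ht
    rw [interior_Icc] at ht
    have hd : HasDerivAt (fun t => (-1:ℝ) * p.eval t) (-1 * (derivative p).eval t) t :=
      ((p.hasDerivAt t).const_mul (-1:ℝ))
    change 0 < deriv (fun t => (-1:ℝ) * p.eval t) t
    rw [hd.deriv]
    have := hneg t (Set.mem_Icc_of_Ioo ht)
    linarith

lemma slope_inj (p q : Polynomial ℝ) {a b : ℝ}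
    (hp' : ∀ x ∈ Set.Icc a b, (derivative p).eval x ≠ 0)
    (hW : ∀ x ∈ Set.Icc a b,
      (derivative (derivative q) * derivative p
        - derivative q * derivative (derivative p)).eval x ≠ 0)
    {α β' γ θ : ℝ} (hα : α ∈ Set.Icc a b) (hθ : θ ∈ Set.Icc a b)
    (hαβ : α < β') (hβγ : β' ≤ γ) (hγθ : γ < θ)
    (hx : p.eval β' - p.eval α = p.eval θ - p.eval γ)
    (hy : q.eval β' - q.eval α = q.eval θ - q.eval γ) : False := by
  have hab : a ≤ b := le_trans hα.1 (le_trans (by linarith) hθ.2)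
  have hβ : β' ∈ Set.Icc a b := ⟨le_trans hα.1 (le_of_lt hαβ), le_trans (by linarith) hθ.2⟩
  have hγ' : γ ∈ Set.Icc a b := ⟨le_trans hα.1 (by linarith), le_trans (le_of_lt hγθ) hθ.2⟩
  set w : ℝ → ℝ := fun t => (derivative q).eval t / (derivative p).eval t with hw
  have hwderiv : ∀ t ∈ Set.Ioo a b, HasDerivAt w
      (((derivative (derivative q) * derivative p
        - derivative q * derivative (derivative p)).eval t) / ((derivative p).eval t)^2) t := by
    intro t ht
    have h1 := (derivative q).hasDerivAt t
    have h2 := (derivative p).hasDerivAt t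
    have h3 := h1.div h2 (hp' t (Set.mem_Icc_of_Ioo ht))
    simp only [eval_sub, eval_mul]
    exact h3
  have hwcont : ContinuousOn w (Set.Icc a b) :=
    ContinuousOn.div ((derivative q).continuous).continuousOn
      ((derivative p).continuous).continuousOn hp'
  have hWcont : ContinuousOn (fun t => (derivative (derivative q) * derivative p
      - derivative q * derivative (derivative p)).eval t) (Set.Icc a b) :=
    (Polynomial.continuous _).continuousOn
  have hinj : Set.InjOn w (Set.Icc a b) := by
    rcases sign_const hWcont hab hW with hpos | hneg
    · apply StrictMonoOn.injOn
      apply strictMonoOn_of_deriv_pos (convex_Icc a b) hwcont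
      intro t ht
      rw [interior_Icc] at ht
      rw [(hwderiv t ht).deriv]
      have h1 := hpos t (Set.mem_Icc_of_Ioo ht)
      have h2 := hp' t (Set.mem_Icc_of_Ioo ht)
      positivity
    · apply StrictAntiOn.injOn
      apply strictAntiOn_of_deriv_neg (convex_Icc a b) hwcont
      intro t ht
      rw [interior_Icc] at ht
      rw [(hwderiv t ht).deriv]
      have h1 := hneg t (Set.mem_Icc_of_Ioo ht)
      have h2 := hp' t (Set.mem_Icc_of_Ioo ht)
      have h3 : (0:ℝ) < ((derivative p).eval t)^2 := by positivity
      exact div_neg_of_neg_of_pos h1 h3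
  have hmvt1 := exists_ratio_deriv_eq_ratio_slope (fun t => p.eval t) hαβ
    (p.continuous).continuousOn ((p.differentiable).differentiableOn)
    (fun t => q.eval t) (q.continuous).continuousOn ((q.differentiable).differentiableOn)
  obtain ⟨ξ, hξ, hmv1⟩ := hmvt1
  have hmvt2 := exists_ratio_deriv_eq_ratio_slope (fun t => p.eval t) hγθ
    (p.continuous).continuousOn ((p.differentiable).differentiableOn)
    (fun t => q.eval t) (q.continuous).continuousOn ((q.differentiable).differentiableOn)
  obtain ⟨η, hη, hmv2⟩ := hmvt2
  have hξI : ξ ∈ Set.Icc a b :=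
    ⟨le_trans hα.1 (le_of_lt hξ.1), le_trans (le_of_lt hξ.2) hβ.2⟩
  have hηI : η ∈ Set.Icc a b :=
    ⟨le_trans hγ'.1 (le_of_lt hη.1), le_trans (le_of_lt hη.2) hθ.2⟩
  have hD : p.eval β' - p.eval α ≠ 0 := by
    intro h0
    obtain ⟨ζ, hζ, hζ0⟩ := exists_deriv_eq_zero (f := fun t => p.eval t) hαβ
      (p.continuous).continuousOn (by linarith)
    have hz : (derivative p).eval ζ = 0 := by
      rw [← Polynomial.deriv]; exact hζ0
    exact hp' ζ ⟨le_trans hα.1 (le_of_lt hζ.1), le_trans (le_of_lt hζ.2) hβ.2⟩ hz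
  rw [Polynomial.deriv, Polynomial.deriv] at hmv1 hmv2
  have hwξ : w ξ = (q.eval β' - q.eval α) / (p.eval β' - p.eval α) := by
    rw [hw]
    have hpξ := hp' ξ hξI
    field_simp
    linarith [hmv1]
  have hD2 : p.eval θ - p.eval γ ≠ 0 := by rw [← hx]; exact hD
  have hwη : w η = (q.eval θ - q.eval γ) / (p.eval θ - p.eval γ) := by
    rw [hw]
    have hpη := hp' η hηI
    field_simp
    linarith [hmv2]
  have hweq : w ξ = w η := by rw [hwξ, hwη, hx, hy]
  have heq : ξ = η := hinj hξI hηI hweq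
  have hlt : ξ < η := by linarith [hξ.2, hη.1]
  exact absurd heq (ne_of_lt hlt)

lemma pigeon (A Z : Finset ℝ) (m : ℕ) (hm : Z.card ≤ m) :
    ∃ F : Finset ℝ, F ⊆ A ∧ (∀ u ∈ F, u ∉ Z) ∧
      A.card ≤ (m+1) * F.card + 2*m ∧
      (∀ z ∈ Z, ∀ u ∈ F, ∀ v ∈ F, ¬ (u ≤ z ∧ z ≤ v)) := by
  set A' := A \ Z with hA'
  set φ : ℝ → ℕ := fun a => (Z.filter (fun z => z < a)).card with hφ
  have hmaps : ∀ a ∈ A', φ a ∈ Finset.range (m+1) := by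
    intro a _
    rw [Finset.mem_range, hφ]
    exact Nat.lt_succ_of_le (le_trans (Finset.card_filter_le _ _) hm)
  obtain ⟨t₀, _, hF⟩ := Finset.exists_le_card_fiber_of_mul_le_card_of_maps_to hmaps
    ⟨0, Finset.mem_range.2 (by omega)⟩
    (by rw [Finset.card_range, mul_comm]; exact Nat.div_mul_le_self A'.card (m+1))
  refine ⟨A'.filter (fun a => φ a = t₀), ?_, ?_, ?_, ?_⟩
  · exact le_trans (Finset.filter_subset _ _) (by rw [hA']; exact Finset.sdiff_subset)
  · intro u hu
    rw [Finset.mem_filter, hA', Finset.mem_sdiff] at hu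
    exact hu.1.2
  · have h1 : A.card ≤ A'.card + Z.card := Finset.card_le_card_sdiff_add_card
    have h2 := Nat.div_add_mod A'.card (m+1)
    have h3 : A'.card % (m+1) < m+1 := Nat.mod_lt _ (by omega)
    have h4 : (m+1) * (A'.card/(m+1)) ≤ (m+1) * (A'.filter (fun a => φ a = t₀)).card :=
      Nat.mul_le_mul_left _ hF
    omega
  · intro z hz u hu v hv huv
    obtain ⟨huz, hzv⟩ := huv
    rw [Finset.mem_filter, hA', Finset.mem_sdiff] at hu hv
    have hu' : u < z := lt_of_le_of_ne huz (fun h => hu.1.2 (h ▸ hz))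
    have hv' : z < v := lt_of_le_of_ne hzv (fun h => hv.1.2 (h ▸ hz))
    have hsub : insert z (Z.filter (fun w => w < u)) ⊆ Z.filter (fun w => w < v) := by
      intro w hw
      rcases Finset.mem_insert.1 hw with rfl | hw
      · exact Finset.mem_filter.2 ⟨hz, hv'⟩
      · rw [Finset.mem_filter] at hw ⊢
        exact ⟨hw.1, lt_trans hw.2 (lt_trans hu' hv')⟩
    have hni : z ∉ Z.filter (fun w => w < u) := by
      rw [Finset.mem_filter]
      rintro ⟨_, h⟩
      linarith
    have hcard := Finset.card_le_card hsub
    rw [Finset.card_insert_of_notMem hni] at hcard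
    have h1 : φ u = t₀ := hu.2
    have h2 : φ v = t₀ := hv.2
    rw [hφ] at h1 h2
    simp only at h1 h2
    omega

lemma rpow_52_sq (nn : ℝ) (hnn : 0 ≤ nn) : (nn ^ ((5:ℝ)/2))^2 = nn^(5:ℕ) := by
  rw [← Real.rpow_natCast nn 5, ← Real.rpow_natCast (nn ^ ((5:ℝ)/2)) 2,
    ← Real.rpow_mul hnn]
  norm_num

lemma conclude_le (c nn Y : ℝ) (hc : 0 ≤ c) (hnn : 0 ≤ nn) (hY : 0 ≤ Y)
    (h : c^2 * nn^(5:ℕ) ≤ Y^2) : c * nn ^ ((5:ℝ)/2) ≤ Y := by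
  apply le_of_pow_le_pow_left₀ (by norm_num : (2:ℕ) ≠ 0) hY
  rw [mul_pow, rpow_52_sq nn hnn]
  exact h

lemma small_arith (c nn S T dd : ℝ) (hc : c = 1/(10^6*(dd+1)^6)) (hdd : 1 ≤ dd)
    (hn1 : 1 ≤ nn) (hn : nn ≤ 100*(dd+1)) (hS : nn ≤ dd*S) (hT : nn ≤ dd*T) :
    c^2 * nn^(5:ℕ) ≤ (S*T)^2 := by
  have hdd0 : (0:ℝ) < dd := by linarith
  have hS0 : (0:ℝ) < S := by nlinarith
  have hT0 : (0:ℝ) < T := by nlinarith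
  have h1 : nn^2 ≤ dd^2*(S*T) := by nlinarith
  have h2 : (nn^2)^2 ≤ (dd^2*(S*T))^2 := by
    apply pow_le_pow_left₀ (by positivity) h1
  have hX : (0:ℝ) < (10^6*(dd+1)^6)^2 := by positivity
  have e3 : (dd+1)^5 ≤ (dd+1)^12 := by
    apply pow_le_pow_right₀ (by linarith) (by norm_num)
  have e2 : nn*dd^4 ≤ 100*(dd+1)*(dd+1)^4 := by
    have e1 : dd^4 ≤ (dd+1)^4 := by
      apply pow_le_pow_left₀ (by linarith) (by linarith)
    nlinarith [pow_pos hdd0 4, pow_pos (show (0:ℝ) < dd+1 by linarith) 4]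
  have e5 : c^2 * (nn*dd^4) ≤ 1 := by
    rw [hc, div_pow, one_pow, div_mul_eq_mul_div, one_mul, div_le_one hX]
    have h10 : ((10:ℝ)^6*(dd+1)^6)^2 = 10^12*(dd+1)^12 := by ring
    rw [h10]
    nlinarith [e2, e3, pow_pos (show (0:ℝ) < dd+1 by linarith) 12,
      pow_pos (show (0:ℝ) < dd+1 by linarith) 5]
  calc c^2 * nn^(5:ℕ) = (c^2*nn)*(nn^2)^2 := by ring
    _ ≤ (c^2*nn)*(dd^2*(S*T))^2 := by
        apply mul_le_mul_of_nonneg_left h2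
        have : (0:ℝ) < c := by rw [hc]; positivity
        nlinarith
    _ = (c^2*(nn*dd^4))*(S*T)^2 := by ring
    _ ≤ 1*(S*T)^2 := by
        apply mul_le_mul_of_nonneg_right e5 (by positivity)
    _ = (S*T)^2 := one_mul _

lemma main_arith (c nn S T dd k BB CC : ℝ) (hc : c = 1/(10^6*(dd+1)^6)) (hdd : 1 ≤ dd)
    (hn1 : 1 ≤ nn)
    (hkey : k^3 * BB * CC ≤ 50*(S*T)^2)
    (hk : nn ≤ 4*(4*dd+1)*k) (hk0 : 0 ≤ k) (hBB : nn ≤ dd*BB) (hCC : nn ≤ dd*CC) :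
    c^2 * nn^(5:ℕ) ≤ (S*T)^2 := by
  have hdd0 : (0:ℝ) < dd := by linarith
  have hBB0 : (0:ℝ) < BB := by nlinarith
  have hCC0 : (0:ℝ) < CC := by nlinarith
  have h1 : nn^3 ≤ (4*(4*dd+1))^3 * k^3 := by
    calc nn^3 ≤ (4*(4*dd+1)*k)^3 := by
          apply pow_le_pow_left₀ (by linarith) hk
      _ = (4*(4*dd+1))^3 * k^3 := by ring
  have h2 : nn^2 ≤ dd^2*(BB*CC) := by nlinarith
  have h3 : nn^(5:ℕ) ≤ (4*(4*dd+1))^3 * dd^2 * (k^3*BB*CC) := by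
    calc (nn:ℝ)^(5:ℕ) = nn^3*nn^2 := by ring
      _ ≤ ((4*(4*dd+1))^3 * k^3)*(dd^2*(BB*CC)) := by
          apply mul_le_mul h1 h2 (by positivity) (by positivity)
      _ = (4*(4*dd+1))^3 * dd^2 * (k^3*BB*CC) := by ring
  have h4 : nn^(5:ℕ) ≤ (4*(4*dd+1))^3 * dd^2 * 50 * (S*T)^2 := by
    calc (nn:ℝ)^(5:ℕ) ≤ (4*(4*dd+1))^3 * dd^2 * (k^3*BB*CC) := h3
      _ ≤ (4*(4*dd+1))^3 * dd^2 * (50*(S*T)^2) := by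
          apply mul_le_mul_of_nonneg_left hkey (by positivity)
      _ = (4*(4*dd+1))^3 * dd^2 * 50 * (S*T)^2 := by ring
  have hX : (0:ℝ) < (10^6*(dd+1)^6)^2 := by positivity
  have e5 : c^2 * ((4*(4*dd+1))^3 * dd^2 * 50) ≤ 1 := by
    rw [hc, div_pow, one_pow, div_mul_eq_mul_div, one_mul, div_le_one hX]
    have h10 : ((10:ℝ)^6*(dd+1)^6)^2 = 10^12*(dd+1)^12 := by ring
    rw [h10]
    have e1 : (4*dd+1)^3 ≤ (5*(dd+1))^3 := by
      apply pow_le_pow_left₀ (by linarith) (by linarith)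
    have e2 : dd^2 ≤ (dd+1)^2 := by
      apply pow_le_pow_left₀ (by linarith) (by linarith)
    have e3 : (dd+1)^5 ≤ (dd+1)^12 := by
      apply pow_le_pow_right₀ (by linarith) (by norm_num)
    nlinarith [pow_pos (show (0:ℝ) < dd+1 by linarith) 5,
      pow_pos (show (0:ℝ) < dd+1 by linarith) 12,
      pow_pos (show (0:ℝ) < dd+1 by linarith) 3,
      pow_pos (show (0:ℝ) < dd+1 by linarith) 2,
      pow_pos (show (0:ℝ) < 4*dd+1 by linarith) 3,
      mul_le_mul e1 e2 (by positivity) (by positivity)]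
  have hST2 : (0:ℝ) ≤ (S*T)^2 := by positivity
  have hc2 : (0:ℝ) < c := by rw [hc]; positivity
  calc c^2 * nn^(5:ℕ) ≤ c^2 * ((4*(4*dd+1))^3 * dd^2 * 50 * (S*T)^2) := by
        apply mul_le_mul_of_nonneg_left h4 (by positivity)
    _ = (c^2 * ((4*(4*dd+1))^3 * dd^2 * 50)) * (S*T)^2 := by ring
    _ ≤ 1 * (S*T)^2 := mul_le_mul_of_nonneg_right e5 hST2
    _ = (S*T)^2 := one_mul _

theorem stmt9 (δ : ℕ) :
    ∃ c : ℝ, 0 < c ∧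
      ∀ p₁ p₂ q₁ q₂ : Polynomial ℝ,
        0 < p₁.natDegree → 0 < p₂.natDegree → 0 < q₁.natDegree → 0 < q₂.natDegree →
        p₁.natDegree ≤ δ → p₂.natDegree ≤ δ → q₁.natDegree ≤ δ → q₂.natDegree ≤ δ →
        p₁.eval 0 = 0 → p₂.eval 0 = 0 → q₁.eval 0 = 0 → q₂.eval 0 = 0 →
        ¬ EquivA p₁ q₁ →
        ∀ (n : ℕ) (A B : Finset ℝ), A.card = n → B.card = n →
          c * (n : ℝ) ^ ((5 : ℝ) / 2) ≤
            (((A.image fun a => p₁.eval a) + (B.image fun b => p₂.eval b)).card : ℝ) *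
            (((A.image fun a => q₁.eval a) + (B.image fun b => q₂.eval b)).card : ℝ) := by
  refine ⟨1/(10^6*((δ:ℝ)+1)^6), by positivity, ?_⟩
  intro p₁ p₂ q₁ q₂ hd1 hd2 hd3 hd4 hδ1 hδ2 hδ3 hδ4 h01 h02 h03 h04 hne n A B hA hB
  set c : ℝ := 1/(10^6*((δ:ℝ)+1)^6) with hc
  set S : Finset ℝ := (A.image fun a => p₁.eval a) + (B.image fun b => p₂.eval b) with hSdef
  set T : Finset ℝ := (A.image fun a => q₁.eval a) + (B.image fun b => q₂.eval b) with hTdef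
  rcases Nat.eq_zero_or_pos n with hn0 | hn1
  · rw [hn0]
    simp only [Nat.cast_zero]
    rw [Real.zero_rpow (by norm_num : (5:ℝ)/2 ≠ 0), mul_zero]
    positivity
  have hδ1' : 1 ≤ δ := le_trans hd1 hδ1
  have hAne : A.Nonempty := Finset.card_pos.1 (by omega)
  have hBne : B.Nonempty := Finset.card_pos.1 (by omega)
  have hBp : (B.image fun b => p₂.eval b).Nonempty := hBne.image _
  have hBq : (B.image fun b => q₂.eval b).Nonempty := hBne.image _
  have hS_lb : n ≤ δ * S.card := by
    calc n = A.card := hA.symm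
      _ ≤ p₁.natDegree * (A.image fun a => p₁.eval a).card := fiber_card p₁ hd1 A
      _ ≤ δ * (A.image fun a => p₁.eval a).card := Nat.mul_le_mul_right _ hδ1
      _ ≤ δ * S.card := Nat.mul_le_mul_left _ (by
          rw [hSdef]; exact Finset.card_le_card_add_right hBp)
  have hT_lb : n ≤ δ * T.card := by
    calc n = A.card := hA.symm
      _ ≤ q₁.natDegree * (A.image fun a => q₁.eval a).card := fiber_card q₁ hd3 A
      _ ≤ δ * (A.image fun a => q₁.eval a).card := Nat.mul_le_mul_right _ hδ3
      _ ≤ δ * T.card := Nat.mul_le_mul_left _ (by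
          rw [hTdef]; exact Finset.card_le_card_add_right hBq)
  have hBB_lb : n ≤ δ * (B.image fun b => p₂.eval b).card := by
    calc n = B.card := hB.symm
      _ ≤ p₂.natDegree * (B.image fun b => p₂.eval b).card := fiber_card p₂ hd2 B
      _ ≤ δ * (B.image fun b => p₂.eval b).card := Nat.mul_le_mul_right _ hδ2
  have hCC_lb : n ≤ δ * (B.image fun b => q₂.eval b).card := by
    calc n = B.card := hB.symm
      _ ≤ q₂.natDegree * (B.image fun b => q₂.eval b).card := fiber_card q₂ hd4 B
      _ ≤ δ * (B.image fun b => q₂.eval b).card := Nat.mul_le_mul_right _ hδ4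
  apply conclude_le _ _ _ (by rw [hc]; positivity) (Nat.cast_nonneg n) (by positivity)
  by_cases hsmall : n ≤ 100*(δ+1)
  · apply small_arith c n S.card T.card (δ:ℝ) hc (by exact_mod_cast hδ1')
      (by exact_mod_cast hn1) (by push_cast; exact_mod_cast hsmall)
      (by exact_mod_cast hS_lb) (by exact_mod_cast hT_lb)
  push_neg at hsmall
  -- main case
  have hp1' : derivative p₁ ≠ 0 := fun h => by
    have := natDegree_eq_zero_of_derivative_eq_zero h; omega
  have hq1' : derivative q₁ ≠ 0 := fun h => by
    have := natDegree_eq_zero_of_derivative_eq_zero h; omega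
  have hWne : derivative (derivative q₁) * derivative p₁
      - derivative q₁ * derivative (derivative p₁) ≠ 0 :=
    W_ne_zero p₁ q₁ hd1 hd3 h01 h03 hne
  set Z : Finset ℝ := (derivative p₁).roots.toFinset ∪ (derivative q₁).roots.toFinset
      ∪ (derivative (derivative q₁) * derivative p₁
      - derivative q₁ * derivative (derivative p₁)).roots.toFinset with hZ
  have hZcard : Z.card ≤ 4*δ := by
    have c1 : (derivative p₁).roots.toFinset.card ≤ δ :=
      le_trans (Multiset.toFinset_card_le _) (le_trans (card_roots' _)
        (le_trans (natDegree_derivative_le p₁) (by omega)))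
    have c2 : (derivative q₁).roots.toFinset.card ≤ δ :=
      le_trans (Multiset.toFinset_card_le _) (le_trans (card_roots' _)
        (le_trans (natDegree_derivative_le q₁) (by omega)))
    have cW : (derivative (derivative q₁) * derivative p₁
        - derivative q₁ * derivative (derivative p₁)).natDegree ≤ 2*δ := by
      have d1 : (derivative (derivative q₁) * derivative p₁).natDegree ≤ 2*δ := by
        apply le_trans natDegree_mul_le
        have e1 := natDegree_derivative_le q₁
        have e2 := natDegree_derivative_le (derivative q₁)
        have e3 := natDegree_derivative_le p₁
        omega
      have d2 : (derivative q₁ * derivative (derivative p₁)).natDegree ≤ 2*δ := by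
        apply le_trans natDegree_mul_le
        have e1 := natDegree_derivative_le q₁
        have e2 := natDegree_derivative_le (derivative p₁)
        have e3 := natDegree_derivative_le p₁
        omega
      exact le_trans (natDegree_sub_le _ _) (by omega)
    have c3 : (derivative (derivative q₁) * derivative p₁
        - derivative q₁ * derivative (derivative p₁)).roots.toFinset.card ≤ 2*δ :=
      le_trans (Multiset.toFinset_card_le _) (le_trans (card_roots' _) cW)
    calc Z.card ≤ ((derivative p₁).roots.toFinset ∪ (derivative q₁).roots.toFinset).card
        + (derivative (derivative q₁) * derivative p₁
          - derivative q₁ * derivative (derivative p₁)).roots.toFinset.card := by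
          rw [hZ]; exact Finset.card_union_le _ _
      _ ≤ 4*δ := by
          have := Finset.card_union_le (derivative p₁).roots.toFinset
            (derivative q₁).roots.toFinset
          omega
  obtain ⟨F, hFA, hFZ, hFcard, hbetween⟩ := pigeon A Z (4*δ) hZcard
  have hF2 : 2 ≤ F.card := by
    by_contra hcon
    push_neg at hcon
    have h1 : (4*δ+1) * F.card ≤ (4*δ+1) * 1 := Nat.mul_le_mul_left _ (by omega)
    rw [hA] at hFcard
    omega
  set k : ℕ := F.card - 1 with hk
  have hk1 : 1 ≤ k := by omega
  have hFk : F.card = k + 1 := by omega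
  have hkn : n ≤ 4*((4*δ+1)*k) := by
    have e1 : (4*δ+1) * F.card = (4*δ+1)*k + (4*δ+1) := by rw [hFk]; ring
    have e2 : (4*δ+1)*1 ≤ (4*δ+1)*k := Nat.mul_le_mul_left _ hk1
    rw [hA] at hFcard
    omega
  have hFne : F.Nonempty := Finset.card_pos.1 (by omega)
  set mn : ℝ := F.min' hFne with hmn
  set mx : ℝ := F.max' hFne with hmx
  have hmnmx : mn ≤ mx := F.min'_le _ (F.max'_mem hFne)
  have hnotZ : ∀ x ∈ Set.Icc mn mx, x ∉ Z := by
    intro x hx hxZ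
    exact hbetween x hxZ mn (F.min'_mem hFne) mx (F.max'_mem hFne) ⟨hx.1, hx.2⟩
  have hp'ne : ∀ x ∈ Set.Icc mn mx, (derivative p₁).eval x ≠ 0 := by
    intro x hx h0
    apply hnotZ x hx
    rw [hZ]
    apply Finset.mem_union_left
    apply Finset.mem_union_left
    rw [Multiset.mem_toFinset, mem_roots hp1']
    exact h0
  have hq'ne : ∀ x ∈ Set.Icc mn mx, (derivative q₁).eval x ≠ 0 := by
    intro x hx h0
    apply hnotZ x hx
    rw [hZ]
    apply Finset.mem_union_left
    apply Finset.mem_union_right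
    rw [Multiset.mem_toFinset, mem_roots hq1']
    exact h0
  have hWne' : ∀ x ∈ Set.Icc mn mx, (derivative (derivative q₁) * derivative p₁
      - derivative q₁ * derivative (derivative p₁)).eval x ≠ 0 := by
    intro x hx h0
    apply hnotZ x hx
    rw [hZ]
    apply Finset.mem_union_right
    rw [Multiset.mem_toFinset, mem_roots hWne]
    exact h0
  obtain ⟨ε₁, hε₁, hmono₁⟩ := mono_pm p₁ hmnmx hp'ne
  obtain ⟨ε₂, hε₂, hmono₂⟩ := mono_pm q₁ hmnmx hq'ne
  have hε₁0 : ε₁ ≠ 0 := by rcases hε₁ with h | h <;> rw [h] <;> norm_num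
  have hε₂0 : ε₂ ≠ 0 := by rcases hε₂ with h | h <;> rw [h] <;> norm_num
  set av : ℕ → ℝ := fun i => if h : i < k+1 then F.orderEmbOfFin hFk ⟨i, h⟩ else 0 with hav
  have ha_mem : ∀ i ≤ k, av i ∈ F := by
    intro i hi
    rw [hav]
    simp only
    rw [dif_pos (by omega : i < k+1)]
    exact Finset.orderEmbOfFin_mem F hFk _
  have ha_mono : ∀ i j, i < j → j ≤ k → av i < av j := by
    intro i j hij hj
    rw [hav]; simp only
    rw [dif_pos (by omega : i < k+1), dif_pos (by omega : j < k+1)]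
    exact (F.orderEmbOfFin hFk).strictMono (Fin.mk_lt_mk.2 hij)
  have ha_Icc : ∀ i ≤ k, av i ∈ Set.Icc mn mx := fun i hi =>
    ⟨F.min'_le _ (ha_mem i hi), F.le_max' _ (ha_mem i hi)⟩
  set B₁ := (B.image fun b => p₂.eval b).image (fun z => ε₁*z) with hB₁
  set C₁ := (B.image fun b => q₂.eval b).image (fun z => ε₂*z) with hC₁
  set S₁ := S.image (fun z => ε₁*z) with hS₁
  set T₁ := T.image (fun z => ε₂*z) with hT₁
  set xv : ℕ → ℝ := fun i => ε₁ * p₁.eval (av i) with hxv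
  set yv : ℕ → ℝ := fun i => ε₂ * q₁.eval (av i) with hyv
  have hxmono : ∀ i j, i < j → j ≤ k → xv i < xv j := fun i j hij hj =>
    hmono₁ (ha_Icc i (by omega)) (ha_Icc j hj) (ha_mono i j hij hj)
  have hymono : ∀ i j, i < j → j ≤ k → yv i < yv j := fun i j hij hj =>
    hmono₂ (ha_Icc i (by omega)) (ha_Icc j hj) (ha_mono i j hij hj)
  have hinjkey : ∀ i j, i < k → j < k → i < j →
      xv (i+1) - xv i = xv (j+1) - xv j → yv (i+1) - yv i = yv (j+1) - yv j → False := by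
    intro i j hik hjk hij hdx hdy
    rw [hxv] at hdx
    rw [hyv] at hdy
    simp only at hdx hdy
    have hdx' : p₁.eval (av (i+1)) - p₁.eval (av i)
        = p₁.eval (av (j+1)) - p₁.eval (av j) := by
      apply mul_left_cancel₀ hε₁0
      ring_nf
      ring_nf at hdx
      linarith
    have hdy' : q₁.eval (av (i+1)) - q₁.eval (av i)
        = q₁.eval (av (j+1)) - q₁.eval (av j) := by
      apply mul_left_cancel₀ hε₂0
      ring_nf
      ring_nf at hdy
      linarith
    have hmid : av (i+1) ≤ av j := by
      rcases eq_or_lt_of_le (Nat.succ_le_of_lt hij) with he | hlt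
      · rw [show i+1 = j from he]
      · exact le_of_lt (ha_mono (i+1) j hlt (by omega))
    exact slope_inj p₁ q₁ hp'ne hWne' (ha_Icc i (by omega)) (ha_Icc (j+1) (by omega))
      (ha_mono i (i+1) (by omega) (by omega)) hmid
      (ha_mono j (j+1) (by omega) (by omega)) hdx' hdy'
  have hinj : ∀ i j, i < k → j < k → xv (i+1) - xv i = xv (j+1) - xv j →
      yv (i+1) - yv i = yv (j+1) - yv j → i = j := by
    intro i j hik hjk hdx hdy
    rcases lt_trichotomy i j with h | h | h
    · exact (hinjkey i j hik hjk h hdx hdy).elim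
    · exact h
    · exact (hinjkey j i hjk hik h hdx.symm hdy.symm).elim
  have hSmem : ∀ i ≤ k, ∀ b ∈ B₁, xv i + b ∈ S₁ := by
    intro i hi b hb
    rw [hB₁] at hb
    simp only [Finset.mem_image] at hb
    obtain ⟨b₀, hb₀, rfl⟩ := hb
    rw [hS₁, hxv]
    simp only
    have hmem : p₁.eval (av i) + b₀ ∈ S := by
      rw [hSdef]
      apply Finset.add_mem_add
      · exact Finset.mem_image_of_mem _ (hFA (ha_mem i hi))
      · exact Finset.mem_image.2 hb₀
    have heq : ε₁ * p₁.eval (av i) + ε₁ * b₀ = ε₁ * (p₁.eval (av i) + b₀) := by ring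
    rw [heq]
    exact Finset.mem_image_of_mem _ hmem
  have hTmem : ∀ i ≤ k, ∀ b ∈ C₁, yv i + b ∈ T₁ := by
    intro i hi b hb
    rw [hC₁] at hb
    simp only [Finset.mem_image] at hb
    obtain ⟨b₀, hb₀, rfl⟩ := hb
    rw [hT₁, hyv]
    simp only
    have hmem : q₁.eval (av i) + b₀ ∈ T := by
      rw [hTdef]
      apply Finset.add_mem_add
      · exact Finset.mem_image_of_mem _ (hFA (ha_mem i hi))
      · exact Finset.mem_image.2 hb₀
    have heq : ε₂ * q₁.eval (av i) + ε₂ * b₀ = ε₂ * (q₁.eval (av i) + b₀) := by ring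
    rw [heq]
    exact Finset.mem_image_of_mem _ hmem
  have hB₁ne : B₁.Nonempty := (hBne.image _).image _
  have hC₁ne : C₁.Nonempty := (hBne.image _).image _
  have hcore := core S₁ T₁ B₁ C₁ k xv yv hk1 hB₁ne hC₁ne hxmono hymono hinj hSmem hTmem
  have hS₁c : S₁.card = S.card :=
    Finset.card_image_of_injective _ (fun u v huv => mul_left_cancel₀ hε₁0 huv)
  have hT₁c : T₁.card = T.card :=
    Finset.card_image_of_injective _ (fun u v huv => mul_left_cancel₀ hε₂0 huv)
  have hB₁c : B₁.card = (B.image fun b => p₂.eval b).card :=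
    Finset.card_image_of_injective _ (fun u v huv => mul_left_cancel₀ hε₁0 huv)
  have hC₁c : C₁.card = (B.image fun b => q₂.eval b).card :=
    Finset.card_image_of_injective _ (fun u v huv => mul_left_cancel₀ hε₂0 huv)
  rw [hS₁c, hT₁c, hB₁c, hC₁c] at hcore
  have hkncast : (n:ℝ) ≤ 4*(4*(δ:ℝ)+1)*(k:ℝ) := by
    have hcast := (Nat.cast_le (α := ℝ)).2 hkn
    push_cast at hcast
    linarith
  exact main_arith c n S.card T.card (δ:ℝ) k ((B.image fun b => p₂.eval b).card)
    ((B.image fun b => q₂.eval b).card) hc (by exact_mod_cast hδ1')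
    (by exact_mod_cast hn1) (by exact_mod_cast hcore) hkncast (Nat.cast_nonneg k)
    (by exact_mod_cast hBB_lb) (by exact_mod_cast hCC_lb)
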